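/- In the Ehrenfeucht–Mycielski sequence, every matched string that is matched at its second occurrence belongs to R_n: specifically, if at generation step j the matched suffix is x_i…x_j and this is the second occurrence of that word, then b⁺(i) = x_i…x_j, and hence x_i…x_j ∈ R_n for all n ≥ j. -/

import Mathlib

/-- The word `w` occurs in the binary sequence `x` starting at position `i`. -/
def OccursAt (x : ℕ → Bool) (w : List Bool) (i : ℕ) : Prop :=
  ∀ k : Fin w.length, x (i + k) = w.get k

/-- At generation step `n` (the first `n` bits `x 0, …, x (n-1)` are known),
the suffix of length `l` of the current prefix matches an earlier occurrence
starting at `j` (so the bit following that earlier occurrence is known). -/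
def MatchAt (x : ℕ → Bool) (n l j : ℕ) : Prop :=
  0 < l ∧ l ≤ n ∧ j + l < n ∧ ∀ k < l, x (j + k) = x (n - l + k)

/-- `x` is generated by the Ehrenfeucht–Mycielski rule: it starts `0,1,0` and,
at each step, the longest suffix of the current prefix that occurred before is
found, its last previous occurrence is located, and the appended bit is the
complement of the bit following that previous occurrence. -/
def IsEM (x : ℕ → Bool) : Prop :=
  x 0 = false ∧ x 1 = true ∧ x 2 = false ∧
  ∀ n, 3 ≤ n → ∃ l j, MatchAt x n l j ∧
    (∀ l' j', MatchAt x n l' j' → l' ≤ l) ∧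
    (∀ j', MatchAt x n l j' → j' ≤ j) ∧
    x n = !x (j + l)

/-- `Rset x n` is the set of binary words occurring at least twice as
substrings of the first `n` bits of `x`. -/
def Rset (x : ℕ → Bool) (n : ℕ) : Set (List Bool) :=
  {w | ∃ i j, i < j ∧ OccursAt x w i ∧ OccursAt x w j ∧ j + w.length ≤ n}

/-- `w = b⁺(i)`: the longest word starting at position `i` whose occurrence at
`i` is at least its second occurrence in the sequence `x`. -/
def IsBPlus (x : ℕ → Bool) (i : ℕ) (w : List Bool) : Prop :=
  OccursAt x w i ∧ (∃ j, j < i ∧ OccursAt x w j) ∧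
  ∀ w' : List Bool, OccursAt x w' i → (∃ j, j < i ∧ OccursAt x w' j) →
    w'.length ≤ w.length

/-- `l` is the length of the longest suffix match used at generation step `n`. -/
def MaxMatchLen (x : ℕ → Bool) (n l : ℕ) : Prop :=
  (∃ j, MatchAt x n l j) ∧ ∀ l' j, MatchAt x n l' j → l' ≤ l

/-- The substring of `x` of length `l` starting at position `i`. -/
def window (x : ℕ → Bool) (i l : ℕ) : List Bool :=
  (List.range l).map fun k => x (i + k)


lemma window_length (x : ℕ → Bool) (i l : ℕ) : (window x i l).length = l := by
  simp [window]

lemma occursAt_window_iff (x : ℕ → Bool) (i l j : ℕ) :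
    OccursAt x (window x i l) j ↔ ∀ k < l, x (j + k) = x (i + k) := by
  constructor
  · intro h k hk
    have := h ⟨k, by simpa [window] using hk⟩
    simpa [window] using this
  · intro h k
    have hk : (k : ℕ) < l := by have := k.2; simpa [window] using this
    have := h k hk
    rw [List.get_eq_getElem]
    simpa [window] using this

/-- Every matched string that is matched at its second occurrence belongs to
`R_n`: if at generation step `n` the matched suffix is the length-`l` window
starting at `n - l` and this is the second occurrence of that word (there is
exactly one earlier occurrence), then `b⁺(n - l)` is that word, and hence the
word belongs to `R_m` for every `m ≥ n`. -/
theorem em_matched_second_occurrence_mem_Rset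
    (x : ℕ → Bool) (hx : IsEM x) (n l : ℕ) (hn : 3 ≤ n)
    (hmax : MaxMatchLen x n l)
    (hsecond : ∃ j₀, j₀ < n - l ∧ OccursAt x (window x (n - l) l) j₀ ∧
      ∀ k, k < n - l → OccursAt x (window x (n - l) l) k → k = j₀) :
    IsBPlus x (n - l) (window x (n - l) l) ∧
    ∀ m, n ≤ m → window x (n - l) l ∈ Rset x m := by
  obtain ⟨hx0, hx1, hx2, hrule⟩ := hx
  obtain ⟨⟨j1, hm1⟩, hmax2⟩ := hmax
  obtain ⟨j₀, hj₀lt, hj₀occ, huniq⟩ := hsecond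
  obtain ⟨hl0, hln, hj1l, hm1'⟩ := hm1
  obtain ⟨L, J, hMJ, hLmax, hJmax, hbit⟩ := hrule n hn
  have hLl : L = l := le_antisymm (hmax2 L J hMJ) (hLmax l j1 ⟨hl0, hln, hj1l, hm1'⟩)
  rw [hLl] at hMJ hbit
  have hJocc : OccursAt x (window x (n - l) l) J := by
    rw [occursAt_window_iff]
    intro k hk
    exact hMJ.2.2.2 k hk
  have hJlt : J < n - l := by
    have := hMJ.2.2.1
    omega
  have hJ0 : J = j₀ := huniq J hJlt hJocc
  subst hJ0
  have hself : OccursAt x (window x (n - l) l) (n - l) := by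
    rw [occursAt_window_iff]; intro k hk; rfl
  refine ⟨⟨hself, ⟨J, hJlt, hJocc⟩, ?_⟩, ?_⟩
  · rintro w' hw'i ⟨j', hj', hw'j⟩
    by_contra hlen
    push_neg at hlen
    rw [window_length] at hlen
    have hj'occ : OccursAt x (window x (n - l) l) j' := by
      rw [occursAt_window_iff]
      intro k hk
      have h1 := hw'j ⟨k, by omega⟩
      have h2 := hw'i ⟨k, by omega⟩
      simp only at h1 h2
      rw [h1, h2]
    have hj'J : j' = J := huniq j' hj' hj'occ
    subst hj'J
    have h1 := hw'j ⟨l, hlen⟩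
    have h2 := hw'i ⟨l, hlen⟩
    simp only at h1 h2
    have hnll : n - l + l = n := by omega
    rw [hnll] at h2
    rw [hbit, h1] at h2
    exact (Bool.not_ne_self _) h2
  · intro m hm
    refine ⟨J, n - l, hJlt, hJocc, hself, ?_⟩
    rw [window_length]
    omega
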